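/- Let l₁: Mx + Ny + P = 0 and l₂: My − Nx + D = 0 (P, D ≠ 0) be two perpendicular lines not through the origin. Their images under elliptic inversion with respect to x²/a² + y²/b² = 1 are the ellipses x²/a² + y²/b² + (M/P)x + (N/P)y = 0 and x²/a² + y²/b² − (N/D)x + (M/D)y = 0, and the tangent lines to these ellipses at the origin, namely Mx + Ny = 0 and −Nx + My = 0, are perpendicular. -/

import Mathlib

/-- Elliptic inversion with respect to the ellipse x^2/a^2 + y^2/b^2 = 1. -/
noncomputable def einv (a b : ℝ) (p : ℝ × ℝ) : ℝ × ℝ :=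
  (a ^ 2 * b ^ 2 * p.1 / (b ^ 2 * p.1 ^ 2 + a ^ 2 * p.2 ^ 2),
   a ^ 2 * b ^ 2 * p.2 / (b ^ 2 * p.1 ^ 2 + a ^ 2 * p.2 ^ 2))

/-- Euclidean norm on ℝ × ℝ. -/
noncomputable def nrm (p : ℝ × ℝ) : ℝ := Real.sqrt (p.1 ^ 2 + p.2 ^ 2)

lemma den_ne (a b : ℝ) (ha : 0 < a) (hb : 0 < b) (p : ℝ × ℝ) (hp : p ≠ 0) :
    b ^ 2 * p.1 ^ 2 + a ^ 2 * p.2 ^ 2 ≠ 0 := by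
  have h1 : p.1 ≠ 0 ∨ p.2 ≠ 0 := by
    by_contra hc
    push_neg at hc
    exact hp (Prod.ext hc.1 hc.2)
  rcases h1 with h1 | h1 <;> positivity

theorem elliptic_inversion_perpendicular_lines (a b M N P D : ℝ) (ha : 0 < a) (hb : 0 < b)
    (hMN : (M, N) ≠ (0, 0)) (hP : P ≠ 0) (hD : D ≠ 0) :
    (∀ p : ℝ × ℝ, p ≠ 0 → M * p.1 + N * p.2 + P = 0 →
      (einv a b p).1 ^ 2 / a ^ 2 + (einv a b p).2 ^ 2 / b ^ 2
        + (M / P) * (einv a b p).1 + (N / P) * (einv a b p).2 = 0) ∧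
    (∀ p : ℝ × ℝ, p ≠ 0 → M * p.2 - N * p.1 + D = 0 →
      (einv a b p).1 ^ 2 / a ^ 2 + (einv a b p).2 ^ 2 / b ^ 2
        - (N / D) * (einv a b p).1 + (M / D) * (einv a b p).2 = 0) ∧
    (N * M + (-M) * N = 0) := by
  have ha' : a ≠ 0 := ha.ne'
  have hb' : b ≠ 0 := hb.ne'
  refine ⟨?_, ?_, by ring⟩
  · intro p hp hl
    have hq := den_ne a b ha hb p hp
    simp only [einv]
    field_simp
    linear_combination (a ^ 2 * b ^ 2) * hl
  · intro p hp hl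
    have hq := den_ne a b ha hb p hp
    simp only [einv]
    field_simp
    linear_combination (a ^ 2 * b ^ 2) * hl
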